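/- Let p be a prime and A an infinite abelian torsion p-group (every element has p-power order) such that the subgroup {a ∈ A : p·a = 0} is finite. Then A possesses a subgroup isomorphic to the Prüfer p-group ℤ(p^∞), i.e., to the p-primary component of ℚ/ℤ. -/

import Mathlib

noncomputable section
namespace ValPaper

/-- The group `ℚ/ℤ`. -/
abbrev QmodZ : Type := ℚ ⧸ AddSubgroup.zmultiples (1 : ℚ)

/-- The Prüfer `p`-group `ℤ(p^∞)`: the `p`-primary component of `ℚ/ℤ`, i.e. the subgroup of
all elements of `p`-power order. -/
def pruferGroup (p : ℕ) : AddSubgroup QmodZ :=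
  AddSubgroup.closure { x : QmodZ | ∃ n : ℕ, (p ^ n : ℕ) • x = 0 }

variable (p : ℕ)

private lemma chain {G : Type} [AddCommGroup G] (d : ℕ → G)
    (hd : ∀ j, (p:ℤ) • d (j+1) = d j) (j n : ℕ) :
    ((p:ℤ)^j) • d (n+j) = d n := by
  induction j with
  | zero => simp
  | succ j ih =>
    have : d (n + (j+1)) = d ((n+j)+1) := by ring_nf
    rw [this, pow_succ, mul_smul, hd (n+j)]
    exact ih

private lemma chainD {G : Type} [AddCommGroup G] (d : ℕ → G)
    (hd : ∀ j, (p:ℤ) • d (j+1) = d j) (n m : ℕ) (h : n ≤ m) :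
    ((p:ℤ)^(m-n)) • d m = d n := by
  have := chain p d hd (m-n) n
  rwa [show n + (m-n) = m from by omega] at this

private lemma add_rep {G : Type} [AddCommGroup G] (d : ℕ → G)
    (hd : ∀ j, (p:ℤ) • d (j+1) = d j) (k k' : ℤ) (n m : ℕ) :
    k • d n + k' • d m
      = (k * (p:ℤ)^(max n m - n) + k' * (p:ℤ)^(max n m - m)) • d (max n m) := by
  rw [← chainD p d hd n (max n m) (le_max_left n m),
      ← chainD p d hd m (max n m) (le_max_right n m), smul_smul, smul_smul, add_smul]

private lemma rep_eq {G : Type} [AddCommGroup G] (d : ℕ → G)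
    (hd : ∀ j, (p:ℤ) • d (j+1) = d j)
    (hord : ∀ n (k:ℤ), k • d n = 0 ↔ ((p:ℤ))^(n+1) ∣ k)
    (k k' : ℤ) (n m : ℕ) :
    k • d n = k' • d m ↔
      ((p:ℤ))^(max n m + 1) ∣ k * (p:ℤ)^(max n m - n) - k' * (p:ℤ)^(max n m - m) := by
  rw [← chainD p d hd n (max n m) (le_max_left n m),
      ← chainD p d hd m (max n m) (le_max_right n m), smul_smul, smul_smul,
      ← sub_eq_zero, ← sub_smul, hord]

private def repSubgroup {G : Type} [AddCommGroup G] (d : ℕ → G)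
    (hd : ∀ j, (p:ℤ) • d (j+1) = d j) : AddSubgroup G where
  carrier := {x | ∃ k : ℤ, ∃ n : ℕ, x = k • d n}
  zero_mem' := ⟨0, 0, by simp⟩
  add_mem' := by
    rintro x y ⟨k, n, rfl⟩ ⟨k', m, rfl⟩
    exact ⟨_, max n m, add_rep p d hd k k' n m⟩
  neg_mem' := by
    rintro x ⟨k, n, rfl⟩
    exact ⟨-k, n, (neg_smul k (d n)).symm⟩

private lemma mem_repSubgroup {G : Type} [AddCommGroup G] (d : ℕ → G)
    (hd : ∀ j, (p:ℤ) • d (j+1) = d j) (x : G) :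
    x ∈ repSubgroup p d hd ↔ ∃ k : ℤ, ∃ n : ℕ, x = k • d n := Iff.rfl

section Equiv
variable {G H : Type} [AddCommGroup G] [AddCommGroup H]

private lemma transfer (d : ℕ → G) (e : ℕ → H)
    (hd : ∀ j, (p:ℤ) • d (j+1) = d j) (he : ∀ j, (p:ℤ) • e (j+1) = e j)
    (hord_d : ∀ n (k:ℤ), k • d n = 0 ↔ ((p:ℤ))^(n+1) ∣ k)
    (hord_e : ∀ n (k:ℤ), k • e n = 0 ↔ ((p:ℤ))^(n+1) ∣ k)
    (k k' : ℤ) (n m : ℕ) (h : k • d n = k' • d m) :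
    k • e n = k' • e m := by
  rw [rep_eq p e he hord_e]
  rwa [rep_eq p d hd hord_d] at h

private def repFun (d : ℕ → G) (e : ℕ → H)
    (hd : ∀ j, (p:ℤ) • d (j+1) = d j) (he : ∀ j, (p:ℤ) • e (j+1) = e j)
    (x : repSubgroup p d hd) : repSubgroup p e he :=
  ⟨x.2.choose • e x.2.choose_spec.choose,
    x.2.choose, x.2.choose_spec.choose, rfl⟩

private lemma repFun_spec (d : ℕ → G) (e : ℕ → H)
    (hd : ∀ j, (p:ℤ) • d (j+1) = d j) (he : ∀ j, (p:ℤ) • e (j+1) = e j)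
    (hord_d : ∀ n (k:ℤ), k • d n = 0 ↔ ((p:ℤ))^(n+1) ∣ k)
    (hord_e : ∀ n (k:ℤ), k • e n = 0 ↔ ((p:ℤ))^(n+1) ∣ k)
    (x : repSubgroup p d hd) (k : ℤ) (n : ℕ)
    (hx : (x : G) = k • d n) :
    (repFun p d e hd he x : H) = k • e n := by
  have h0 : (x : G) = x.2.choose • d x.2.choose_spec.choose :=
    x.2.choose_spec.choose_spec
  exact transfer p d e hd he hord_d hord_e _ _ _ _ (h0.symm.trans hx)

private def repEquiv (d : ℕ → G) (e : ℕ → H)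
    (hd : ∀ j, (p:ℤ) • d (j+1) = d j) (he : ∀ j, (p:ℤ) • e (j+1) = e j)
    (hord_d : ∀ n (k:ℤ), k • d n = 0 ↔ ((p:ℤ))^(n+1) ∣ k)
    (hord_e : ∀ n (k:ℤ), k • e n = 0 ↔ ((p:ℤ))^(n+1) ∣ k) :
    repSubgroup p d hd ≃+ repSubgroup p e he := by
  refine AddEquiv.mk' ⟨repFun p d e hd he, repFun p e d he hd, ?_, ?_⟩ ?_
  · intro x
    obtain ⟨k, n, hx⟩ := x.2
    apply Subtype.ext
    have h1 := repFun_spec p d e hd he hord_d hord_e x k n hx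
    have h2 := repFun_spec p e d he hd hord_e hord_d _ k n h1
    rw [h2, ← hx]
  · intro x
    obtain ⟨k, n, hx⟩ := x.2
    apply Subtype.ext
    have h1 := repFun_spec p e d he hd hord_e hord_d x k n hx
    have h2 := repFun_spec p d e hd he hord_d hord_e _ k n h1
    rw [h2, ← hx]
  · intro x y
    obtain ⟨k, n, hx⟩ := x.2
    obtain ⟨k', m, hy⟩ := y.2
    apply Subtype.ext
    have hxy : ((x + y : repSubgroup p d hd) : G)
        = (k * (p:ℤ)^(max n m - n) + k' * (p:ℤ)^(max n m - m)) • d (max n m) := by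
      push_cast
      rw [hx, hy, add_rep p d hd]
    simp only [Equiv.coe_fn_mk, AddSubgroup.coe_add]
    rw [repFun_spec p d e hd he hord_d hord_e _ _ _ hxy,
        repFun_spec p d e hd he hord_d hord_e x k n hx,
        repFun_spec p d e hd he hord_d hord_e y k' m hy, add_rep p e he]

end Equiv

private lemma hord_of' {G : Type} [AddCommGroup G] (hp : p.Prime) (n : ℕ) (x : G)
    (h1 : (p^(n+1) : ℕ) • x = 0) (h2 : (p^n : ℕ) • x ≠ 0) (k : ℤ) :
    k • x = 0 ↔ ((p:ℤ))^(n+1) ∣ k := by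
  haveI := Fact.mk hp
  have ho : addOrderOf x = p^(n+1) := addOrderOf_eq_prime_pow h2 h1
  rw [← addOrderOf_dvd_iff_zsmul_eq_zero, ho]
  push_cast
  rfl

/-- The standard generators of the Prüfer group inside `ℚ/ℤ`. -/
private def q (n : ℕ) : QmodZ :=
  (QuotientAddGroup.mk (((p:ℚ)^(n+1))⁻¹) : QmodZ)

private lemma q_chain (hp : p.Prime) (j : ℕ) : (p:ℤ) • q p (j+1) = q p j := by
  have hp0 : (p:ℚ) ≠ 0 := by exact_mod_cast hp.ne_zero
  show (p:ℤ) • (QuotientAddGroup.mk (((p:ℚ)^(j+2))⁻¹) : QmodZ) = _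
  rw [← QuotientAddGroup.mk_zsmul]
  congr 1
  rw [zsmul_eq_mul]
  push_cast
  field_simp
  ring

private lemma q_nsmul_top (n : ℕ) (hp : p.Prime) : (p^(n+1) : ℕ) • q p n = 0 := by
  have hp0 : (p:ℚ) ≠ 0 := by exact_mod_cast hp.ne_zero
  show ((p^(n+1) : ℕ) • (QuotientAddGroup.mk (((p:ℚ)^(n+1))⁻¹) : QmodZ)) = 0
  rw [← QuotientAddGroup.mk_nsmul, QuotientAddGroup.eq_zero_iff]
  have : (p^(n+1) : ℕ) • ((p:ℚ)^(n+1))⁻¹ = 1 := by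
    rw [nsmul_eq_mul]
    push_cast
    field_simp
  rw [this]
  exact ⟨1, by simp⟩

private lemma q_nsmul_ne (n : ℕ) (hp : p.Prime) : (p^n : ℕ) • q p n ≠ 0 := by
  have hp0 : (p:ℚ) ≠ 0 := by exact_mod_cast hp.ne_zero
  intro h0
  have h0' : ((p^n : ℕ) • (QuotientAddGroup.mk (((p:ℚ)^(n+1))⁻¹) : QmodZ)) = 0 := h0
  rw [← QuotientAddGroup.mk_nsmul, QuotientAddGroup.eq_zero_iff] at h0'
  have he : (p^n : ℕ) • ((p:ℚ)^(n+1))⁻¹ = (p:ℚ)⁻¹ := by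
    rw [nsmul_eq_mul]
    push_cast
    rw [pow_succ]
    field_simp
  rw [he] at h0'
  obtain ⟨k, hk⟩ := h0' 
  simp only [zsmul_eq_mul, mul_one] at hk
  have hk1 : (k * p : ℤ) = 1 := by
    have h := congrArg (· * (p:ℚ)) hk
    rw [inv_mul_cancel₀ hp0] at h
    exact_mod_cast h
  have hd : (p:ℤ) ∣ 1 := Dvd.intro_left k hk1
  have := Int.le_of_dvd one_pos hd
  have := hp.two_le
  omega

private lemma q_ord (hp : p.Prime) (n : ℕ) (k : ℤ) :
    k • q p n = 0 ↔ ((p:ℤ))^(n+1) ∣ k :=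
  hord_of' p hp n (q p n) (q_nsmul_top p n hp) (q_nsmul_ne p n hp) k

private lemma prufer_eq (hp : p.Prime) :
    pruferGroup p = repSubgroup p (q p) (q_chain p hp) := by
  have hp0 : (p:ℚ) ≠ 0 := by exact_mod_cast hp.ne_zero
  apply le_antisymm
  · rw [pruferGroup]
    refine (AddSubgroup.closure_le _).mpr ?_
    rintro x ⟨n, hx⟩
    obtain ⟨r, rfl⟩ := QuotientAddGroup.mk_surjective x
    rw [← QuotientAddGroup.mk_nsmul, QuotientAddGroup.eq_zero_iff] at hx
    obtain ⟨k, hk⟩ := hx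
    simp only [zsmul_eq_mul, mul_one, nsmul_eq_mul] at hk
    match n with
    | 0 =>
      have h0 : (QuotientAddGroup.mk r : QmodZ) = 0 := by
        rw [QuotientAddGroup.eq_zero_iff]
        exact ⟨k, by simpa using hk⟩
      rw [h0]
      exact (repSubgroup p (q p) (q_chain p hp)).zero_mem
    | m + 1 =>
      refine ⟨k, m, ?_⟩
      show _ = k • (QuotientAddGroup.mk (((p:ℚ)^(m+1))⁻¹) : QmodZ)
      rw [← QuotientAddGroup.mk_zsmul]
      congr 1
      rw [zsmul_eq_mul]
      have hppow : ((p:ℚ))^(m+1) ≠ 0 := pow_ne_zero _ hp0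
      push_cast at hk
      rw [hk]
      field_simp
  · rintro x ⟨k, n, rfl⟩
    have hmem : q p n ∈ {x : QmodZ | ∃ n : ℕ, (p ^ n : ℕ) • x = 0} :=
      ⟨n+1, q_nsmul_top p n hp⟩
    exact AddSubgroup.zsmul_mem _ (AddSubgroup.subset_closure hmem) k

section ASide
variable {A : Type} [AddCommGroup A]

private lemma fiber_finite (hfin : {a : A | p • a = 0}.Finite) (b : A) :
    {a : A | p • a = b}.Finite := by
  rcases Set.eq_empty_or_nonempty {a : A | p • a = b} with h | ⟨a0, ha0⟩
  · rw [h]; exact Set.finite_empty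
  · refine (hfin.image (fun z => a0 + z)).subset ?_
    intro a ha
    refine ⟨a - a0, ?_, by simp⟩
    show p • (a - a0) = 0
    rw [smul_sub, ha, ha0, sub_self]

private lemma torsion_finite (hfin : {a : A | p • a = 0}.Finite) (n : ℕ) :
    {a : A | (p^n : ℕ) • a = 0}.Finite := by
  induction n with
  | zero =>
    refine (Set.finite_singleton (0 : A)).subset ?_
    intro a ha
    simpa using ha
  | succ n ih =>
    have hsub : {a : A | (p^(n+1) : ℕ) • a = 0} ⊆
        ⋃ b ∈ {a : A | (p^n : ℕ) • a = 0}, {a : A | p • a = b} := by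
      intro a ha
      simp only [Set.mem_iUnion]
      refine ⟨p • a, ?_, rfl⟩
      show (p^n : ℕ) • (p • a) = 0
      rw [smul_smul]
      rw [show p^n * p = p^(n+1) from (pow_succ p n).symm]
      exact ha
    exact ((ih.biUnion (fun b _ => fiber_finite p hfin b)).subset hsub)

/-- The choice of a "failure exponent" for elements not of infinite height. -/
private def nu (x : A) : ℕ :=
  letI := Classical.dec (∃ n : ℕ, ∀ b : A, (p^n : ℕ) • b ≠ x)
  if h : ∃ n : ℕ, ∀ b : A, (p^n : ℕ) • b ≠ x then h.choose else 0

private lemma nu_spec (x : A) (h : ∃ n : ℕ, ∀ b : A, (p^n : ℕ) • b ≠ x) :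
    ∀ b : A, (p^(nu p x) : ℕ) • b ≠ x := by
  rw [nu]
  split
  next h' => exact h'.choose_spec
  next h' => exact absurd h h' 

private lemma exists_base (hp : p.Prime)
    (htorsion : ∀ a : A, ∃ n : ℕ, (p ^ n : ℕ) • a = 0)
    (hinf : Infinite A)
    (hfin : {a : A | p • a = 0}.Finite) :
    ∃ a : A, a ≠ 0 ∧ p • a = 0 ∧ ∀ n : ℕ, ∃ b : A, (p^n : ℕ) • b = a := by
  classical
  by_contra hcon
  push_neg at hcon
  obtain ⟨N, hN⟩ := (hfin.image (nu p)).bddAbove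
  have claim : ∀ x : A, (p^N : ℕ) • x = 0 := by
    intro x
    by_contra hx
    have hex := htorsion x
    set m := Nat.find hex with hmdef
    have hm : (p^m : ℕ) • x = 0 := Nat.find_spec hex
    have hNm : N < m := by
      by_contra hle
      push_neg at hle
      apply hx
      rw [show p^N = p^(N-m) * p^m from by rw [← pow_add]; congr 1; omega]
      rw [mul_smul, hm, smul_zero]
    set a : A := (p^(m-1) : ℕ) • x with hadef
    have ha0 : a ≠ 0 := Nat.find_min hex (show m-1 < m by omega)
    have hpa : p • a = 0 := by
      rw [hadef, smul_smul, show p * p^(m-1) = p^m from by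
        rw [← pow_succ']; congr 1; omega, hm]
    have hnua : ∀ b : A, (p^(nu p a) : ℕ) • b ≠ a := by
      obtain ⟨n', hn'⟩ := hcon a ha0 hpa
      exact nu_spec p a ⟨n', fun b hb => hn' b hb⟩
    have hmem : a ∈ {a : A | p • a = 0} := hpa
    have hnuN : nu p a ≤ N := hN (Set.mem_image_of_mem (nu p) hmem)
    apply hnua ((p^(m-1-nu p a) : ℕ) • x)
    rw [smul_smul, ← pow_add]
    rw [show nu p a + (m - 1 - nu p a) = m - 1 from by omega]
  have hfinuniv : (Set.univ : Set A).Finite :=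
    (torsion_finite p hfin N).subset (fun x _ => claim x)
  exact Set.infinite_univ hfinuniv

private lemma exists_chain (hp : p.Prime)
    (htorsion : ∀ a : A, ∃ n : ℕ, (p ^ n : ℕ) • a = 0)
    (hinf : Infinite A)
    (hfin : {a : A | p • a = 0}.Finite) :
    ∃ c : ℕ → A, c 0 ≠ 0 ∧ p • c 0 = 0 ∧ ∀ n, p • c (n+1) = c n := by
  classical
  set H : Set A := {x : A | ∀ n : ℕ, ∃ b : A, (p^n : ℕ) • b = x} with hHdef
  have step : ∀ x ∈ H, ∃ y : A, p • y = x ∧ y ∈ H := by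
    intro x hx
    by_contra hc
    push_neg at hc
    have hfail : ∀ y : A, p • y = x → ∃ n : ℕ, ∀ b : A, (p^n : ℕ) • b ≠ y := by
      intro y hy
      have := hc y hy
      rw [hHdef] at this
      simp only [Set.mem_setOf_eq, not_forall] at this
      obtain ⟨n, hn⟩ := this
      exact ⟨n, fun b => by
        intro hb
        exact hn ⟨b, hb⟩⟩
    set F : Set A := {y : A | p • y = x} with hFdef
    have hFfin : F.Finite := fiber_finite p hfin x
    obtain ⟨N, hN⟩ := (hFfin.image (nu p)).bddAbove
    obtain ⟨b, hb⟩ := hx (N+1)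
    set y : A := (p^N : ℕ) • b with hydef
    have hyF : y ∈ F := by
      show p • y = x
      rw [hydef, smul_smul, show p * p^N = p^(N+1) from (pow_succ' p N).symm, hb]
    have hnuy : ∀ b' : A, (p^(nu p y) : ℕ) • b' ≠ y :=
      nu_spec p y (hfail y hyF)
    have hnuN : nu p y ≤ N := hN (Set.mem_image_of_mem (nu p) hyF)
    apply hnuy ((p^(N - nu p y) : ℕ) • b)
    rw [smul_smul, ← pow_add, show nu p y + (N - nu p y) = N from by omega]
  obtain ⟨a, ha0, hpa, haH⟩ := exists_base p hp htorsion hinf hfin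
  have haH' : a ∈ H := haH
  let f : {x : A // x ∈ H} → {x : A // x ∈ H} := fun x =>
    ⟨(step x.1 x.2).choose, (step x.1 x.2).choose_spec.2⟩
  have hf : ∀ x : {x : A // x ∈ H}, p • (f x).1 = x.1 := fun x =>
    (step x.1 x.2).choose_spec.1
  refine ⟨fun n => (f^[n] ⟨a, haH'⟩).1, ?_, ?_, ?_⟩
  · simpa using ha0
  · simpa using hpa
  · intro n
    show p • (f^[n+1] ⟨a, haH'⟩).1 = (f^[n] ⟨a, haH'⟩).1
    rw [Function.iterate_succ_apply']
    exact hf _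

end ASide

/-- An infinite abelian torsion `p`-group whose `p`-torsion subgroup
`{a | p • a = 0}` is finite possesses a subgroup isomorphic to the Prüfer group `ℤ(p^∞)`. -/
theorem statement8 (p : ℕ) (hp : p.Prime) (A : Type) [AddCommGroup A]
    (htorsion : ∀ a : A, ∃ n : ℕ, (p ^ n : ℕ) • a = 0)
    (hinf : Infinite A)
    (hfin : {a : A | p • a = 0}.Finite) :
    ∃ B : AddSubgroup A, Nonempty (B ≃+ pruferGroup p) := by
  obtain ⟨c, hc0, hpc0, hchain⟩ := exists_chain p hp htorsion hinf hfin
  have hd_c : ∀ j, (p:ℤ) • c (j+1) = c j := by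
    intro j
    rw [natCast_zsmul]
    exact hchain j
  have htop : ∀ n, (p^n : ℕ) • c n = c 0 := by
    intro n
    induction n with
    | zero => simp
    | succ n ih =>
      rw [show p^(n+1) = p^n * p from pow_succ p n, mul_smul, hchain n]
      exact ih
  have hzero : ∀ n, (p^(n+1) : ℕ) • c n = 0 := by
    intro n
    rw [show p^(n+1) = p * p^n from (pow_succ' p n), mul_smul, htop n, hpc0]
  have hne : ∀ n, (p^n : ℕ) • c n ≠ 0 := by
    intro n
    rw [htop n]
    exact hc0
  have hord_c : ∀ n (k:ℤ), k • c n = 0 ↔ ((p:ℤ))^(n+1) ∣ k := fun n k =>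
    hord_of' p hp n (c n) (hzero n) (hne n) k
  refine ⟨repSubgroup p c hd_c, ?_⟩
  rw [prufer_eq p hp]
  exact ⟨repEquiv p c (q p) hd_c (q_chain p hp) hord_c (q_ord p hp)⟩
end ValPaper
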